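/- arXiv:1805.00981 — 2 statements merged into one kernel-verified Lean document; each statement's English description precedes it below -/
import Mathlib

section
/- Let f : 𝔹 → 𝔹 be a regular homeomorphism of Sobolev class W^{1,1}_loc possessing Lusin's (N)-property, and let p > 1. Then for all 0 < r₁ < r₂ < 1, ∫_{r₁}^{r₂} L(r)^p / ((2πr)^{p-1} d_p(r)) dr ≤ S(r₂) − S(r₁) ≤ S(r₂), where L(r) denotes the length of the curve f(re^{iθ}), 0 ≤ θ ≤ 2π. -/
open MeasureTheory Filter Metric Set
open scoped Real Topology ENNReal

noncomputable section

/-- The Jacobian determinant of `f : ℂ → ℂ` at `z` (via the a.e. existing total derivative). -/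
def jacobian (f : ℂ → ℂ) (z : ℂ) : ℝ := (fderiv ℝ f z).det

/-- The angular partial derivative `f_θ` of `f` at `z = r e^{iθ}`
(the derivative of `θ ↦ f (r e^{iθ})`). -/
def angDeriv (f : ℂ → ℂ) (z : ℂ) : ℂ := fderiv ℝ f z (Complex.I * z)

/-- The radial partial derivative `f_r` of `f` at `z = r e^{iθ}`. -/
def radDeriv (f : ℂ → ℂ) (z : ℂ) : ℂ := fderiv ℝ f z (z / (‖z‖ : ℂ))

/-- The `p`-angular dilatation `D_p(z) = |f_θ|^p / (r^p J_f)` of `f` at `z`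
with respect to the origin. -/
def angDil (f : ℂ → ℂ) (p : ℝ) (z : ℂ) : ℝ :=
  ‖angDeriv f z‖ ^ p / (‖z‖ ^ p * jacobian f z)

/-- `q_p(r) = ((1/(2πr)) ∫_{γ_r} Q^{1/(p-1)} |dz|)^{p-1}`, written via the arclength
parametrization of the circle `γ_r`. -/
def circMean (Q : ℂ → ℝ) (p : ℝ) (r : ℝ) : ℝ :=
  ((2 * Real.pi)⁻¹ * ∫ θ in (0:ℝ)..(2 * Real.pi),
    Q ((r : ℂ) * Complex.exp (Complex.I * (θ : ℂ))) ^ (1 / (p - 1))) ^ (p - 1)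

/-- `d_p(r)`: the quantity `q_p(r)` for `Q = D_p`. -/
def dMean (f : ℂ → ℂ) (p : ℝ) (r : ℝ) : ℝ := circMean (angDil f p) p r

/-- `S(r) = m(f(B_r))`, the area of the image of the disc of radius `r`. -/
def areaFn (f : ℂ → ℂ) (r : ℝ) : ℝ := (volume (f '' ball (0:ℂ) r)).toReal

/-- `L(r)`: the length of the curve `θ ↦ f(re^{iθ})`, `0 ≤ θ ≤ 2π`. -/
def curveLen (f : ℂ → ℂ) (r : ℝ) : ℝ :=
  ∫ θ in (0:ℝ)..(2 * Real.pi),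
    ‖angDeriv f ((r : ℂ) * Complex.exp (Complex.I * (θ : ℂ)))‖



lemma la_polar_image {r₁ r₂ : ℝ} (h₁ : 0 < r₁) :
    polarCoord.symm '' (Ioo r₁ r₂ ×ˢ Ioo (-π) π) =
      (Complex.measurableEquivRealProd.symm ⁻¹'
        (ball (0:ℂ) r₂ \ closedBall 0 r₁)) ∩ polarCoord.source := by
  have hsub : (Ioo r₁ r₂ ×ˢ Ioo (-π) π : Set (ℝ × ℝ)) ⊆ polarCoord.target := by
    rw [polarCoord_target]
    rintro ⟨x, y⟩ ⟨hx, hy⟩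
    exact ⟨lt_trans h₁ hx.1, hy⟩
  rw [polarCoord.symm_image_eq_source_inter_preimage hsub]
  have habs : ∀ q : ℝ × ℝ, ‖Complex.measurableEquivRealProd.symm q‖
      = Real.sqrt (q.1 ^ 2 + q.2 ^ 2) := by
    intro q
    have : Complex.measurableEquivRealProd.symm q = Complex.equivRealProd.symm q := rfl
    rw [this, Complex.equivRealProd_symm_apply, Complex.norm_def, Complex.normSq_add_mul_I]
  ext q
  simp only [mem_inter_iff, mem_preimage, mem_diff, mem_ball_zero_iff, mem_closedBall_zero_iff,
    habs, and_comm (a := q ∈ polarCoord.source)]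
  refine and_congr_left fun hq => ?_
  have hmem := polarCoord.map_source hq
  rw [polarCoord_target] at hmem
  constructor
  · rintro ⟨h1, _⟩
    simp only [polarCoord_apply] at h1 ⊢
    exact ⟨h1.2, not_le.2 h1.1⟩
  · rintro ⟨h1, h2⟩
    refine ⟨⟨not_le.1 h2, h1⟩, hmem.2⟩

lemma la_polar_null : (volume : Measure (ℝ × ℝ)) polarCoord.sourceᶜ = 0 := by
  have h : polarCoord.sourceᶜ ⊆ (univ : Set ℝ) ×ˢ ({0} : Set ℝ) := by
    intro q hq
    simp only [polarCoord_source, compl_union, mem_inter_iff, mem_compl_iff, mem_setOf_eq,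
      not_lt, Classical.not_not] at hq
    exact ⟨mem_univ _, hq.2⟩
  refine measure_mono_null h ?_
  rw [Measure.volume_eq_prod, Measure.prod_prod]
  simp

lemma la_polar_symm_eq (p : ℝ × ℝ) :
    Complex.measurableEquivRealProd.symm (polarCoord.symm p)
      = (p.1 : ℂ) * Complex.exp (Complex.I * (p.2 : ℂ)) := by
  have : Complex.measurableEquivRealProd.symm (polarCoord.symm p)
      = Complex.equivRealProd.symm (polarCoord.symm p) := rfl
  rw [this, Complex.equivRealProd_symm_apply]
  simp only [polarCoord_symm_apply]
  rw [mul_comm Complex.I, Complex.exp_mul_I]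
  push_cast
  ring

lemma la_lintegral_annulus (g : ℂ → ℝ≥0∞) (hg : Measurable g) {r₁ r₂ : ℝ} (h₁ : 0 < r₁)
    (h₁₂ : r₁ < r₂) :
    ∫⁻ z in ball (0:ℂ) r₂ \ closedBall 0 r₁, g z
      = ∫⁻ r in Ioo r₁ r₂, ∫⁻ θ in Ioo (-π) π,
          ENNReal.ofReal r * g ((r:ℂ) * Complex.exp (Complex.I * (θ:ℂ))) := by
  set e := Complex.measurableEquivRealProd with he
  set A : Set ℂ := ball (0:ℂ) r₂ \ closedBall 0 r₁ with hA
  set s : Set (ℝ × ℝ) := Ioo r₁ r₂ ×ˢ Ioo (-π) π with hs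
  have step1 : ∫⁻ z in A, g z = ∫⁻ q in e.symm ⁻¹' A, g (e.symm q) :=
    ((Complex.volume_preserving_equiv_real_prod.symm).setLIntegral_comp_preimage_emb
      e.symm.measurableEmbedding _ _).symm
  have step2 : ∫⁻ q in e.symm ⁻¹' A, g (e.symm q)
      = ∫⁻ q in polarCoord.symm '' s, g (e.symm q) := by
    rw [la_polar_image h₁]
    refine (setLIntegral_congr ?_).symm
    rw [MeasureTheory.ae_eq_set]
    constructor
    · exact measure_mono_null (fun q hq => (hq.2 hq.1.1 : q ∈ (∅ : Set (ℝ × ℝ)))) measure_empty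
    · exact measure_mono_null (fun q hq => (fun hsrc => hq.2 ⟨hq.1, hsrc⟩ :
        q ∈ polarCoord.sourceᶜ)) la_polar_null
  have hsub : s ⊆ polarCoord.target := by
    rw [polarCoord_target]
    rintro ⟨x, y⟩ ⟨hx, hy⟩
    exact ⟨lt_trans h₁ hx.1, hy⟩
  have hsm : MeasurableSet s := measurableSet_Ioo.prod measurableSet_Ioo
  set B : ℝ × ℝ → ℝ × ℝ →L[ℝ] ℝ × ℝ := fun p =>
    LinearMap.toContinuousLinearMap (Matrix.toLin (Module.Basis.finTwoProd ℝ) (Module.Basis.finTwoProd ℝ)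
      !![Real.cos p.2, -p.1 * Real.sin p.2; Real.sin p.2, p.1 * Real.cos p.2]) with hB
  have hBd : ∀ p ∈ s, HasFDerivWithinAt polarCoord.symm (B p) s p := fun p _ =>
    (hasFDerivAt_polarCoord_symm p).hasFDerivWithinAt
  have B_det : ∀ p, (B p).det = p.1 := by
    intro p
    conv_rhs => rw [← one_mul p.1, ← Real.cos_sq_add_sin_sq p.2]
    simp only [hB, neg_mul, LinearMap.det_toContinuousLinearMap, LinearMap.det_toLin,
      Matrix.det_fin_two_of, sub_neg_eq_add]
    ring
  have hinj : InjOn polarCoord.symm s := by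
    have h := polarCoord.symm.injOn
    rw [polarCoord.symm_source] at h
    exact h.mono hsub
  have step3 : ∫⁻ q in polarCoord.symm '' s, g (e.symm q)
      = ∫⁻ p in s, ENNReal.ofReal |(B p).det| * g (e.symm (polarCoord.symm p)) :=
    lintegral_image_eq_lintegral_abs_det_fderiv_mul volume hsm hBd hinj _
  have step4 : ∫⁻ p in s, ENNReal.ofReal |(B p).det| * g (e.symm (polarCoord.symm p))
      = ∫⁻ p in s, ENNReal.ofReal p.1 * g ((p.1:ℂ) * Complex.exp (Complex.I * (p.2:ℂ))) := by
    refine setLIntegral_congr_fun hsm (fun p hp => ?_)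
    rw [B_det, abs_of_pos (lt_trans h₁ hp.1.1), la_polar_symm_eq]
  have hcont : Continuous fun p : ℝ × ℝ => (p.1:ℂ) * Complex.exp (Complex.I * (p.2:ℂ)) := by
    fun_prop
  have step5 : ∫⁻ p in s, ENNReal.ofReal p.1 * g ((p.1:ℂ) * Complex.exp (Complex.I * (p.2:ℂ)))
      = ∫⁻ r in Ioo r₁ r₂, ∫⁻ θ in Ioo (-π) π,
          ENNReal.ofReal r * g ((r:ℂ) * Complex.exp (Complex.I * (θ:ℂ))) := by
    rw [hs, Measure.volume_eq_prod, ← Measure.prod_restrict]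
    exact lintegral_prod _ ((ENNReal.measurable_ofReal.comp measurable_fst).mul
      (hg.comp hcont.measurable)).aemeasurable
  rw [step1, step2, step3, step4, step5]

lemma la_zmap_cont (r : ℝ) :
    Continuous fun θ : ℝ => (r:ℂ) * Complex.exp (Complex.I * (θ:ℂ)) := by fun_prop

lemma la_abs_z {r : ℝ} (hr : 0 ≤ r) (θ : ℝ) :
    ‖(r:ℂ) * Complex.exp (Complex.I * (θ:ℂ))‖ = r := by
  rw [norm_mul, Complex.norm_exp]
  simp [abs_of_nonneg hr]

lemma la_z_per (r : ℝ) :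
    Function.Periodic (fun θ : ℝ => (r:ℂ) * Complex.exp (Complex.I * (θ:ℂ))) (2*π) := by
  intro θ
  simp only
  push_cast
  rw [mul_add, Complex.exp_add, mul_comm Complex.I (2*(π:ℂ)), Complex.exp_two_pi_mul_I, mul_one]

lemma la_interval_eq (v : ℂ → ℝ) (r : ℝ) :
    ∫ θ in (0:ℝ)..(2*π), v ((r:ℂ) * Complex.exp (Complex.I * (θ:ℂ)))
      = ∫ θ in Ioo (-π) π, v ((r:ℂ) * Complex.exp (Complex.I * (θ:ℂ))) := by
  have per : Function.Periodic
      (fun θ : ℝ => v ((r:ℂ) * Complex.exp (Complex.I * (θ:ℂ)))) (2*π) :=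
    fun θ => by simp only [la_z_per r θ]
  have h1 := per.intervalIntegral_add_eq 0 (-π)
  rw [zero_add, show -π + 2*π = π by ring] at h1
  rw [h1, intervalIntegral.integral_of_le (by linarith [Real.pi_pos] : -π ≤ π),
    integral_Ioc_eq_integral_Ioo]

lemma la_meas_jac (f : ℂ → ℂ) : Measurable (jacobian f) :=
  ContinuousLinearMap.continuous_det.measurable.comp (measurable_fderiv ℝ f)

lemma la_meas_ang (f : ℂ → ℂ) : Measurable (angDeriv f) := by
  have h2 : Continuous fun q : (ℂ →L[ℝ] ℂ) × ℂ => q.1 q.2 :=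
    isBoundedBilinearMap_apply.continuous
  exact h2.measurable.comp
    ((measurable_fderiv ℝ f).prodMk (measurable_const.mul measurable_id))

lemma la_meas_angDil (f : ℂ → ℂ) {p : ℝ} (hp : 0 ≤ p) : Measurable (angDil f p) := by
  unfold angDil
  apply Measurable.div
  · exact (Real.continuous_rpow_const hp).measurable.comp
      (continuous_norm.measurable.comp (la_meas_ang f))
  · exact ((Real.continuous_rpow_const hp).comp continuous_norm).measurable.mul
      (la_meas_jac f)
section SliceTest
variable (f : ℂ → ℂ)

lemma la_slice (f : ℂ → ℂ) {p : ℝ} (hp : 1 < p) {r : ℝ} (hr : 0 < r)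
    (hae : ∀ᵐ (θ : ℝ) ∂(volume.restrict (Ioo (-π) π)),
      DifferentiableAt ℝ f ((r:ℂ) * Complex.exp (Complex.I * (θ:ℂ))) ∧
        0 < jacobian f ((r:ℂ) * Complex.exp (Complex.I * (θ:ℂ)))) :
    0 ≤ curveLen f r ^ p / ((2 * π * r) ^ (p - 1) * dMean f p r) ∧
    ENNReal.ofReal (curveLen f r ^ p / ((2 * π * r) ^ (p - 1) * dMean f p r))
      ≤ ∫⁻ θ in Ioo (-π) π,
          ENNReal.ofReal r * ENNReal.ofReal
            (jacobian f ((r:ℂ) * Complex.exp (Complex.I * (θ:ℂ)))) := by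
  have hπ := Real.pi_pos
  have hp0 : (0:ℝ) < p := lt_trans one_pos hp
  have hp1 : (0:ℝ) < p - 1 := by linarith
  set z : ℝ → ℂ := fun θ => (r:ℂ) * Complex.exp (Complex.I * (θ:ℂ)) with hz
  set μ := volume.restrict (Ioo (-π) π) with hμ
  -- measurability
  have hcz : Continuous z := la_zmap_cont r
  have hmJ : Measurable fun θ => jacobian f (z θ) := (la_meas_jac f).comp hcz.measurable
  have hmD : Measurable fun θ => angDil f p (z θ) :=
    (la_meas_angDil f hp0.le).comp hcz.measurable
  have hmDq : Measurable fun θ => angDil f p (z θ) ^ (1/(p-1)) :=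
    (Real.continuous_rpow_const (by positivity)).measurable.comp hmD
  have hma : Measurable fun θ => ‖angDeriv f (z θ)‖ :=
    (continuous_norm.measurable.comp (la_meas_ang f)).comp hcz.measurable
  -- rewriting curveLen and dMean as integrals over Ioo (-π) π
  have hL : curveLen f r = ∫ θ in Ioo (-π) π, ‖angDeriv f (z θ)‖ :=
    la_interval_eq (fun w => ‖angDeriv f w‖) r
  have hdM : dMean f p r
      = ((2*π)⁻¹ * ∫ θ in Ioo (-π) π, angDil f p (z θ) ^ (1/(p-1))) ^ (p-1) := by
    unfold dMean circMean
    rw [la_interval_eq (fun w => angDil f p w ^ (1/(p-1))) r]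
  -- nonnegativity
  have hLnn : 0 ≤ curveLen f r :=
    intervalIntegral.integral_nonneg (by positivity) (fun θ _ => norm_nonneg _)
  have haeD : ∀ᵐ θ ∂μ, 0 ≤ angDil f p (z θ) := by
    filter_upwards [hae] with θ hθ
    unfold angDil
    exact div_nonneg (Real.rpow_nonneg (norm_nonneg _) _)
      (mul_nonneg (Real.rpow_nonneg (norm_nonneg _) _) hθ.2.le)
  have haeDq : ∀ᵐ θ ∂μ, 0 ≤ angDil f p (z θ) ^ (1/(p-1)) := by
    filter_upwards [haeD] with θ hθ
    exact Real.rpow_nonneg hθ _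
  have hDint_nn : 0 ≤ ∫ θ in Ioo (-π) π, angDil f p (z θ) ^ (1/(p-1)) :=
    integral_nonneg_of_ae haeDq
  have hdM_nn : 0 ≤ dMean f p r := by
    rw [hdM]
    exact Real.rpow_nonneg (by positivity) _
  have hh_nn : 0 ≤ curveLen f r ^ p / ((2 * π * r) ^ (p - 1) * dMean f p r) :=
    div_nonneg (Real.rpow_nonneg hLnn p)
      (mul_nonneg (Real.rpow_nonneg (by positivity) _) hdM_nn)
  refine ⟨hh_nn, ?_⟩
  -- Part 2
  by_cases hDi : IntegrableOn (fun θ => angDil f p (z θ) ^ (1/(p-1))) (Ioo (-π) π) volume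
  case neg =>
    have hDint0 : (∫ θ in Ioo (-π) π, angDil f p (z θ) ^ (1/(p-1))) = 0 :=
      integral_undef hDi
    rw [hdM, hDint0, mul_zero, Real.zero_rpow hp1.ne', mul_zero, div_zero]
    simp
  case pos =>
  set Λ : ℝ≥0∞ := ∫⁻ θ in Ioo (-π) π, ENNReal.ofReal (angDil f p (z θ)) ^ (1/(p-1)) with hΛdef
  set Ji : ℝ≥0∞ := ∫⁻ θ in Ioo (-π) π, ENNReal.ofReal (jacobian f (z θ)) with hJidef
  have hΛae : ∀ᵐ θ ∂μ, ENNReal.ofReal (angDil f p (z θ) ^ (1/(p-1)))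
      = ENNReal.ofReal (angDil f p (z θ)) ^ (1/(p-1)) := by
    filter_upwards [haeD] with θ hθ
    exact (ENNReal.ofReal_rpow_of_nonneg hθ (by positivity)).symm
  have hΛ' : Λ = ∫⁻ θ in Ioo (-π) π, ENNReal.ofReal (angDil f p (z θ) ^ (1/(p-1))) :=
    (lintegral_congr_ae hΛae).symm
  have hDint : (∫ θ in Ioo (-π) π, angDil f p (z θ) ^ (1/(p-1))) = Λ.toReal := by
    rw [integral_eq_lintegral_of_nonneg_ae haeDq hmDq.aestronglyMeasurable, ← hΛ']
  have hΛtop : Λ ≠ ⊤ := by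
    rw [hΛ']
    refine ne_top_of_le_ne_top hDi.2.ne ?_
    exact lintegral_mono fun θ => Real.ofReal_le_enorm _
  -- the RHS equals (ofReal r) * Ji
  have hRHS : (∫⁻ θ in Ioo (-π) π,
      ENNReal.ofReal r * ENNReal.ofReal (jacobian f (z θ))) = ENNReal.ofReal r * Ji :=
    lintegral_const_mul _ (ENNReal.measurable_ofReal.comp hmJ)
  rw [hRHS]
  by_cases hJitop : Ji = ⊤
  · rw [hJitop, ENNReal.mul_top (by simpa using hr)]
    exact le_top
  -- Hölder's inequality
  have hpq : Real.HolderConjugate (p/(p-1)) p := (Real.HolderConjugate.conjExponent hp).symm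
  set φ : ℝ → ℝ≥0∞ := fun θ => ENNReal.ofReal (angDil f p (z θ)) ^ (1/p) with hφdef
  set ψ : ℝ → ℝ≥0∞ := fun θ =>
    ENNReal.ofReal (jacobian f (z θ)) ^ (1/p) * ENNReal.ofReal r with hψdef
  have hφm : Measurable φ := (ENNReal.measurable_ofReal.comp hmD).pow_const _
  have hψm : Measurable ψ :=
    ((ENNReal.measurable_ofReal.comp hmJ).pow_const _).mul_const _
  have hFeq : ∀ᵐ θ ∂μ, ENNReal.ofReal ‖angDeriv f (z θ)‖ = (φ * ψ) θ := by
    filter_upwards [hae] with θ hθ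
    have habs : ‖z θ‖ = r := la_abs_z hr.le θ
    have hy : (0:ℝ) < r ^ p * jacobian f (z θ) :=
      mul_pos (Real.rpow_pos_of_pos hr p) hθ.2
    have hDval : angDil f p (z θ)
        = ‖angDeriv f (z θ)‖ ^ p / (r ^ p * jacobian f (z θ)) := by
      unfold angDil; rw [habs]
    have hofD : ENNReal.ofReal (angDil f p (z θ))
        = ENNReal.ofReal ‖angDeriv f (z θ)‖ ^ p
          / ENNReal.ofReal (r ^ p * jacobian f (z θ)) := by
      rw [hDval, ENNReal.ofReal_div_of_pos hy,
        ENNReal.ofReal_rpow_of_nonneg (norm_nonneg _) hp0.le]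
    set y : ℝ≥0∞ := ENNReal.ofReal (r ^ p * jacobian f (z θ)) with hydef
    have hy0 : y ≠ 0 := by simpa [hydef] using hy
    have hytop : y ≠ ⊤ := ENNReal.ofReal_ne_top
    have hyp0 : y ^ (1/p) ≠ 0 := by
      simp only [ne_eq, ENNReal.rpow_eq_zero_iff, not_or]
      exact ⟨fun h => hy0 h.1, fun h => hytop h.1⟩
    have hyptop : y ^ (1/p) ≠ ⊤ := ENNReal.rpow_ne_top_of_nonneg (by positivity) hytop
    have hsplit : y ^ (1/p)
        = ENNReal.ofReal (jacobian f (z θ)) ^ (1/p) * (ENNReal.ofReal r) ^ (p * (1/p)) := by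
      rw [hydef, ENNReal.ofReal_mul (by positivity), ENNReal.mul_rpow_of_nonneg _ _ (by positivity),
        ← ENNReal.ofReal_rpow_of_nonneg hr.le hp0.le, ← ENNReal.rpow_mul, mul_comm]
    simp only [hφdef, hψdef, Pi.mul_apply]
    rw [mul_one_div_cancel hp0.ne', ENNReal.rpow_one] at hsplit
    rw [hofD, ENNReal.div_rpow_of_nonneg _ _ (by positivity), ← ENNReal.rpow_mul,
      mul_one_div_cancel hp0.ne', ENNReal.rpow_one, ← hsplit,
      ENNReal.div_mul_cancel hyp0 hyptop]
  have hφq : ∀ θ, φ θ ^ (p/(p-1)) = ENNReal.ofReal (angDil f p (z θ)) ^ (1/(p-1)) := by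
    intro θ
    rw [hφdef, ← ENNReal.rpow_mul]
    congr 1
    field_simp
  have hψp : ∀ θ, ψ θ ^ p
      = (ENNReal.ofReal r) ^ p * ENNReal.ofReal (jacobian f (z θ)) := by
    intro θ
    rw [hψdef, ENNReal.mul_rpow_of_nonneg _ _ hp0.le, ← ENNReal.rpow_mul,
      one_div_mul_cancel hp0.ne', ENNReal.rpow_one, mul_comm]
  have hψint : (∫⁻ θ, ψ θ ^ p ∂μ) = (ENNReal.ofReal r) ^ p * Ji := by
    rw [lintegral_congr hψp]
    exact lintegral_const_mul _ (ENNReal.measurable_ofReal.comp hmJ)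
  have hHolder : (∫⁻ θ, ENNReal.ofReal ‖angDeriv f (z θ)‖ ∂μ)
      ≤ Λ ^ ((p-1)/p) * ((ENNReal.ofReal r) ^ p * Ji) ^ (1/p) := by
    calc ∫⁻ θ, ENNReal.ofReal ‖angDeriv f (z θ)‖ ∂μ
        = ∫⁻ θ, (φ * ψ) θ ∂μ := lintegral_congr_ae hFeq
      _ ≤ (∫⁻ θ, φ θ ^ (p/(p-1)) ∂μ) ^ (1/(p/(p-1))) * (∫⁻ θ, ψ θ ^ p ∂μ) ^ (1/p) :=
          ENNReal.lintegral_mul_le_Lp_mul_Lq μ hpq hφm.aemeasurable hψm.aemeasurable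
      _ = Λ ^ ((p-1)/p) * ((ENNReal.ofReal r) ^ p * Ji) ^ (1/p) := by
          rw [lintegral_congr hφq, hψint, one_div_div]
  have hrtop : (ENNReal.ofReal r) ^ p ≠ ⊤ :=
    ENNReal.rpow_ne_top_of_nonneg hp0.le ENNReal.ofReal_ne_top
  have hNtop : Λ ^ ((p-1)/p) * ((ENNReal.ofReal r) ^ p * Ji) ^ (1/p) ≠ ⊤ :=
    ENNReal.mul_ne_top (ENNReal.rpow_ne_top_of_nonneg (by positivity) hΛtop)
      (ENNReal.rpow_ne_top_of_nonneg (by positivity) (ENNReal.mul_ne_top hrtop hJitop))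
  set N : ℝ := Λ.toReal ^ ((p-1)/p) * (r ^ p * Ji.toReal) ^ (1/p) with hNdef
  have hNe : (Λ ^ ((p-1)/p) * ((ENNReal.ofReal r) ^ p * Ji) ^ (1/p)).toReal = N := by
    rw [hNdef, ENNReal.toReal_mul, ← ENNReal.toReal_rpow, ← ENNReal.toReal_rpow,
      ENNReal.toReal_mul, ← ENNReal.toReal_rpow, ENNReal.toReal_ofReal hr.le]
  have hNnn : 0 ≤ N :=
    mul_nonneg (Real.rpow_nonneg ENNReal.toReal_nonneg _) (Real.rpow_nonneg
      (mul_nonneg (Real.rpow_nonneg hr.le _) ENNReal.toReal_nonneg) _)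
  have hcurve : curveLen f r ≤ N := by
    by_cases hai : IntegrableOn (fun θ => ‖angDeriv f (z θ)‖) (Ioo (-π) π) volume
    · rw [hL, integral_eq_lintegral_of_nonneg_ae (ae_of_all _ fun θ => norm_nonneg _)
        hma.aestronglyMeasurable, ← hNe]
      exact ENNReal.toReal_mono hNtop hHolder
    · rw [hL, integral_undef hai]
      exact hNnn
  rw [hdM, hDint]
  set lam := Λ.toReal with hlamdef
  by_cases hlam0 : lam = 0
  · rw [hlam0, mul_zero, Real.zero_rpow hp1.ne', mul_zero, div_zero]
    simp
  have hlam : 0 < lam := lt_of_le_of_ne ENNReal.toReal_nonneg (Ne.symm hlam0)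
  have hLp : curveLen f r ^ p ≤ N ^ p := Real.rpow_le_rpow hLnn hcurve hp0.le
  have hNp : N ^ p = lam ^ (p-1) * (r ^ p * Ji.toReal) := by
    rw [hNdef, Real.mul_rpow (Real.rpow_nonneg ENNReal.toReal_nonneg _)
        (Real.rpow_nonneg (mul_nonneg (Real.rpow_nonneg hr.le _) ENNReal.toReal_nonneg) _),
      ← Real.rpow_mul ENNReal.toReal_nonneg, div_mul_cancel₀ _ hp0.ne',
      ← Real.rpow_mul (mul_nonneg (Real.rpow_nonneg hr.le _) ENNReal.toReal_nonneg),
      one_div_mul_cancel hp0.ne', Real.rpow_one]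
  have hden : (2*π*r) ^ (p-1) * ((2*π)⁻¹ * lam) ^ (p-1) = r ^ (p-1) * lam ^ (p-1) := by
    rw [← Real.mul_rpow (by positivity) (by positivity),
      ← Real.mul_rpow hr.le hlam.le]
    congr 1
    field_simp
  have hdenpos : 0 < r ^ (p-1) * lam ^ (p-1) :=
    mul_pos (Real.rpow_pos_of_pos hr _) (Real.rpow_pos_of_pos hlam _)
  have hkey : curveLen f r ^ p / ((2*π*r) ^ (p-1) * ((2*π)⁻¹ * lam) ^ (p-1))
      ≤ r * Ji.toReal := by
    rw [hden]
    refine le_trans ((div_le_div_iff_of_pos_right hdenpos).mpr hLp) (le_of_eq ?_)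
    have hrp : r ^ p = r ^ (p-1) * r := by
      nth_rewrite 1 [show p = (p-1) + 1 by ring]
      rw [Real.rpow_add hr, Real.rpow_one]
    rw [hNp, hrp]
    have h1 : (r:ℝ) ^ (p-1) ≠ 0 := (Real.rpow_pos_of_pos hr _).ne'
    have h2 : lam ^ (p-1) ≠ 0 := (Real.rpow_pos_of_pos hlam _).ne'
    field_simp
  calc ENNReal.ofReal (curveLen f r ^ p / ((2*π*r) ^ (p-1) * ((2*π)⁻¹ * lam) ^ (p-1)))
      ≤ ENNReal.ofReal (r * Ji.toReal) := ENNReal.ofReal_le_ofReal hkey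
    _ = ENNReal.ofReal r * Ji := by
        rw [ENNReal.ofReal_mul hr.le, ENNReal.ofReal_toReal hJitop]


end SliceTest

/-- A regular homeomorphism of the unit disc onto itself of Sobolev class `W^{1,1}_loc`
possessing Lusin's (N)-property: a sense-preserving homeomorphism `𝔹 → 𝔹`,
differentiable a.e. with (positive, by sense-preservation) non-vanishing Jacobian a.e.,
with locally integrable differential, mapping null subsets of `𝔹` onto null sets. -/
def IsRegularHomeo (f : ℂ → ℂ) : Prop :=
  (∃ e : (ball (0:ℂ) 1) ≃ₜ (ball (0:ℂ) 1), ∀ z : (ball (0:ℂ) 1), (e z : ℂ) = f z) ∧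
  (∀ᵐ z ∂(volume.restrict (ball (0:ℂ) 1)), DifferentiableAt ℝ f z ∧ 0 < jacobian f z) ∧
  LocallyIntegrableOn (fun z => ‖fderiv ℝ f z‖) (ball (0:ℂ) 1) volume ∧
  (∀ s, s ⊆ ball (0:ℂ) 1 → volume s = 0 → volume (f '' s) = 0)


lemma la_inj (f : ℂ → ℂ) (hf : IsRegularHomeo f) : InjOn f (ball (0:ℂ) 1) := by
  obtain ⟨e, he⟩ := hf.1
  intro x hx y hy hxy
  have h1 : e ⟨x, hx⟩ = e ⟨y, hy⟩ := Subtype.ext (by rw [he, he]; exact hxy)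
  simpa [Subtype.ext_iff] using e.injective h1

lemma la_maps (f : ℂ → ℂ) (hf : IsRegularHomeo f) :
    MapsTo f (ball (0:ℂ) 1) (ball (0:ℂ) 1) := by
  obtain ⟨e, he⟩ := hf.1
  intro x hx
  rw [← he ⟨x, hx⟩]
  exact (e ⟨x, hx⟩).2

lemma la_image_open (f : ℂ → ℂ) (hf : IsRegularHomeo f) {r : ℝ} (hr : r ≤ 1) :
    IsOpen (f '' ball (0:ℂ) r) := by
  obtain ⟨e, he⟩ := hf.1
  have himg : f '' ball (0:ℂ) r
      = Subtype.val '' (⇑e '' (Subtype.val ⁻¹' ball (0:ℂ) r)) := by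
    ext w
    constructor
    · rintro ⟨x, hx, rfl⟩
      have hx1 : x ∈ ball (0:ℂ) 1 := ball_subset_ball hr hx
      exact ⟨e ⟨x, hx1⟩, ⟨⟨x, hx1⟩, hx, rfl⟩, he ⟨x, hx1⟩⟩
    · rintro ⟨u, ⟨v, hv, rfl⟩, rfl⟩
      exact ⟨v, hv, (he v).symm⟩
  rw [himg]
  exact isOpen_ball.isOpenMap_subtype_val _
    (e.isOpenMap _ (continuous_subtype_val.isOpen_preimage _ isOpen_ball))

lemma la_meas_curveLen (f : ℂ → ℂ) : Measurable fun r : ℝ => curveLen f r := by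
  have hπ := Real.pi_pos
  have h1 : (fun r : ℝ => curveLen f r) = fun r : ℝ => ∫ θ in Ioc (0:ℝ) (2*π),
      ‖angDeriv f ((r:ℂ) * Complex.exp (Complex.I * (θ:ℂ)))‖ := by
    funext r
    rw [curveLen, intervalIntegral.integral_of_le (by positivity)]
  rw [h1]
  have hjoint : StronglyMeasurable fun q : ℝ × ℝ =>
      ‖angDeriv f ((q.1:ℂ) * Complex.exp (Complex.I * (q.2:ℂ)))‖ := by
    have hc : Continuous fun q : ℝ × ℝ => (q.1:ℂ) * Complex.exp (Complex.I * (q.2:ℂ)) := by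
      fun_prop
    exact ((continuous_norm.measurable.comp (la_meas_ang f)).comp
      hc.measurable).stronglyMeasurable
  exact (StronglyMeasurable.integral_prod_right' (ν := volume.restrict (Ioc 0 (2*π)))
    hjoint).measurable

lemma la_meas_dMean (f : ℂ → ℂ) {p : ℝ} (hp : 1 < p) :
    Measurable fun r : ℝ => dMean f p r := by
  have hπ := Real.pi_pos
  have hp0 : (0:ℝ) < p := lt_trans one_pos hp
  have h1 : (fun r : ℝ => dMean f p r) = fun r : ℝ =>
      ((2*π)⁻¹ * ∫ θ in Ioc (0:ℝ) (2*π),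
        angDil f p ((r:ℂ) * Complex.exp (Complex.I * (θ:ℂ))) ^ (1/(p-1))) ^ (p-1) := by
    funext r
    rw [dMean, circMean, intervalIntegral.integral_of_le (by positivity)]
  rw [h1]
  have hjoint : StronglyMeasurable fun q : ℝ × ℝ =>
      angDil f p ((q.1:ℂ) * Complex.exp (Complex.I * (q.2:ℂ))) ^ (1/(p-1)) := by
    have hc : Continuous fun q : ℝ × ℝ => (q.1:ℂ) * Complex.exp (Complex.I * (q.2:ℂ)) := by
      fun_prop
    exact ((Real.continuous_rpow_const (one_div_nonneg.mpr (by linarith))).measurable.comp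
      (((la_meas_angDil f hp0.le)).comp hc.measurable)).stronglyMeasurable
  have hint : Measurable fun r : ℝ => ∫ θ in Ioc (0:ℝ) (2*π),
      angDil f p ((r:ℂ) * Complex.exp (Complex.I * (θ:ℂ))) ^ (1/(p-1)) :=
    (StronglyMeasurable.integral_prod_right' (ν := volume.restrict (Ioc 0 (2*π)))
      hjoint).measurable
  exact ((Real.continuous_rpow_const (by linarith)).measurable).comp
    (measurable_const.mul hint)

lemma la_meas_h (f : ℂ → ℂ) {p : ℝ} (hp : 1 < p) :
    Measurable fun r : ℝ => curveLen f r ^ p / ((2*π*r) ^ (p-1) * dMean f p r) := by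
  have hp0 : (0:ℝ) < p := lt_trans one_pos hp
  apply Measurable.div
  · exact (Real.continuous_rpow_const hp0.le).measurable.comp (la_meas_curveLen f)
  · refine Measurable.mul ?_ (la_meas_dMean f hp)
    exact ((Real.continuous_rpow_const (by linarith)).comp
      (continuous_const.mul continuous_id)).measurable

/-- **Length–area principle.** For `0 < r₁ < r₂ < 1`,
`∫_{r₁}^{r₂} L(r)^p/((2πr)^{p-1} d_p(r)) dr ≤ S(r₂) - S(r₁) ≤ S(r₂)`. -/
theorem length_area_principle (f : ℂ → ℂ) (hf : IsRegularHomeo f) (p : ℝ) (hp : 1 < p) :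
    ∀ r₁ r₂ : ℝ, 0 < r₁ → r₁ < r₂ → r₂ < 1 →
      (∫ r in r₁..r₂, curveLen f r ^ p / ((2 * Real.pi * r) ^ (p - 1) * dMean f p r)) ≤
          areaFn f r₂ - areaFn f r₁ ∧
        areaFn f r₂ - areaFn f r₁ ≤ areaFn f r₂ := by
  intro r₁ r₂ hr₁ hr₁₂ hr₂
  have hπ := Real.pi_pos
  refine ⟨?_, by have : (0:ℝ) ≤ areaFn f r₁ := ENNReal.toReal_nonneg; linarith⟩
  -- the annulus and the good set
  set A : Set ℂ := ball (0:ℂ) r₂ \ closedBall 0 r₁ with hAdef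
  have hA1 : A ⊆ ball (0:ℂ) 1 := fun w hw => ball_subset_ball hr₂.le hw.1
  set Dset : Set ℂ := {w | DifferentiableAt ℝ f w ∧ 0 < jacobian f w} with hDset
  have hDmeas : MeasurableSet Dset :=
    (measurableSet_of_differentiableAt ℝ f).inter
      (measurableSet_lt measurable_const (la_meas_jac f))
  have hBad : volume (ball (0:ℂ) 1 \ Dset) = 0 := by
    have h1 := (ae_restrict_iff' measurableSet_ball).mp hf.2.1
    rw [ae_iff] at h1
    refine measure_mono_null (fun w hw => ?_) h1
    exact fun h => hw.2 (h hw.1)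
  set A' : Set ℂ := A ∩ Dset with hA'
  have hA'meas : MeasurableSet A' :=
    (measurableSet_ball.diff measurableSet_closedBall).inter hDmeas
  have hAA' : A =ᵐ[volume] A' := by
    rw [MeasureTheory.ae_eq_set]
    constructor
    · refine measure_mono_null (fun w hw => ?_) hBad
      exact ⟨hA1 hw.1, fun h => hw.2 ⟨hw.1, h⟩⟩
    · exact measure_mono_null (fun w hw => (hw.2 hw.1.1 : w ∈ (∅ : Set ℂ))) measure_empty
  -- the Jacobian lintegral over the annulus
  set T : ℝ≥0∞ := ∫⁻ w in A, ENNReal.ofReal (jacobian f w) with hT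
  have hTA' : T = ∫⁻ w in A', ENNReal.ofReal (jacobian f w) := setLIntegral_congr hAA'
  have hderiv : ∀ x ∈ A', HasFDerivWithinAt f (fderiv ℝ f x) A' x := fun x hx =>
    hx.2.1.hasFDerivAt.hasFDerivWithinAt
  have hinj' : InjOn f A' := (la_inj f hf).mono (fun w hw => hA1 hw.1)
  have hjaceq : (∫⁻ x in A', ENNReal.ofReal |(fderiv ℝ f x).det|)
      = ∫⁻ x in A', ENNReal.ofReal (jacobian f x) :=
    setLIntegral_congr_fun hA'meas (fun x hx => by
      rw [show |(fderiv ℝ f x).det| = |jacobian f x| from rfl, abs_of_pos hx.2.2])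
  have hTle : T ≤ volume (f '' A') := by
    rw [hTA', ← hjaceq]
    exact lintegral_abs_det_fderiv_le_addHaar_image volume hA'meas hderiv hinj'
  -- area comparison
  have hb11 : ball (0:ℂ) r₁ ⊆ ball 0 1 := ball_subset_ball (hr₁₂.trans hr₂).le
  have hdisj : Disjoint (f '' A') (f '' ball (0:ℂ) r₁) := by
    rw [Set.disjoint_iff_inter_eq_empty,
      ← (la_inj f hf).image_inter (fun w hw => hA1 hw.1) hb11]
    have : A' ∩ ball (0:ℂ) r₁ = ∅ := by
      rw [eq_empty_iff_forall_notMem]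
      rintro w ⟨hw1, hw2⟩
      exact hw1.1.2 (ball_subset_closedBall hw2)
    rw [this, image_empty]
  have hadd : volume (f '' A') + volume (f '' ball (0:ℂ) r₁)
      ≤ volume (f '' ball (0:ℂ) r₂) := by
    rw [← measure_union hdisj (la_image_open f hf (hr₁₂.trans hr₂).le).measurableSet,
      ← image_union]
    refine measure_mono (image_mono ?_)
    rintro w (hw | hw)
    · exact hw.1.1
    · exact ball_subset_ball hr₁₂.le hw
  have hfin : volume (f '' ball (0:ℂ) r₂) ≠ ⊤ := by
    refine ne_top_of_le_ne_top (measure_ball_lt_top (x := (0:ℂ)) (r := 1)).ne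
      (measure_mono ?_)
    exact (((la_maps f hf).mono_left (ball_subset_ball hr₂.le)).image_subset)
  have hA'fin : volume (f '' A') ≠ ⊤ :=
    ne_top_of_le_ne_top hfin (le_trans le_self_add hadd)
  have hB1fin : volume (f '' ball (0:ℂ) r₁) ≠ ⊤ :=
    ne_top_of_le_ne_top hfin (le_trans le_add_self hadd)
  have hTfin : T ≠ ⊤ := ne_top_of_le_ne_top hA'fin hTle
  have harea : T.toReal ≤ areaFn f r₂ - areaFn f r₁ := by
    have h1 := ENNReal.toReal_mono hfin hadd
    rw [ENNReal.toReal_add hA'fin hB1fin] at h1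
    have h2 := ENNReal.toReal_mono hA'fin hTle
    unfold areaFn
    linarith
  -- polar coordinates
  have hpolar : T = ∫⁻ r in Ioo r₁ r₂, ∫⁻ θ in Ioo (-π) π,
      ENNReal.ofReal r * ENNReal.ofReal
        (jacobian f ((r:ℂ) * Complex.exp (Complex.I * (θ:ℂ)))) := by
    rw [hT, hAdef]
    exact la_lintegral_annulus (fun w => ENNReal.ofReal (jacobian f w))
      (ENNReal.measurable_ofReal.comp (la_meas_jac f)) hr₁ hr₁₂
  -- a.e. goodness of circle slices
  set Bad : Set ℂ := ball (0:ℂ) 1 \ Dset with hBadDef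
  have hBadmeas : MeasurableSet Bad := measurableSet_ball.diff hDmeas
  have hindm : Measurable (Bad.indicator (fun _ => (1:ℝ≥0∞))) :=
    measurable_one.indicator hBadmeas
  have hind := la_lintegral_annulus (Bad.indicator (fun _ => (1:ℝ≥0∞))) hindm hr₁ hr₁₂
  have hLHS0 : (∫⁻ w in A, Bad.indicator (fun _ => (1:ℝ≥0∞)) w) = 0 := by
    rw [lintegral_indicator hBadmeas, setLIntegral_one, Measure.restrict_apply hBadmeas]
    exact measure_mono_null (inter_subset_left.trans (fun w hw => hw)) hBad
  rw [hAdef] at hLHS0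
  rw [hLHS0] at hind
  have hczq : Continuous fun q : ℝ × ℝ => (q.1:ℂ) * Complex.exp (Complex.I * (q.2:ℂ)) := by
    fun_prop
  have hinnerm : Measurable fun r : ℝ => ∫⁻ θ in Ioo (-π) π,
      ENNReal.ofReal r * Bad.indicator (fun _ => (1:ℝ≥0∞))
        ((r:ℂ) * Complex.exp (Complex.I * (θ:ℂ))) := by
    apply Measurable.lintegral_prod_right (f := fun (r θ : ℝ) =>
      ENNReal.ofReal r * Bad.indicator (fun _ => (1:ℝ≥0∞))
        ((r:ℂ) * Complex.exp (Complex.I * (θ:ℂ))))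
    exact (ENNReal.measurable_ofReal.comp measurable_fst).mul (hindm.comp hczq.measurable)
  have hae_inner : ∀ᵐ (r : ℝ) ∂(volume.restrict (Ioo r₁ r₂)),
      (∫⁻ θ in Ioo (-π) π, ENNReal.ofReal r * Bad.indicator (fun _ => (1:ℝ≥0∞))
        ((r:ℂ) * Complex.exp (Complex.I * (θ:ℂ)))) = 0 :=
    (lintegral_eq_zero_iff hinnerm).mp hind.symm
  have haeslice : ∀ᵐ (r : ℝ) ∂(volume.restrict (Ioo r₁ r₂)),
      0 < r ∧ ∀ᵐ (θ : ℝ) ∂(volume.restrict (Ioo (-π) π)),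
        DifferentiableAt ℝ f ((r:ℂ) * Complex.exp (Complex.I * (θ:ℂ))) ∧
          0 < jacobian f ((r:ℂ) * Complex.exp (Complex.I * (θ:ℂ))) := by
    filter_upwards [hae_inner, ae_restrict_mem measurableSet_Ioo] with r h0 hmem
    have hr0 : 0 < r := lt_trans hr₁ hmem.1
    refine ⟨hr0, ?_⟩
    have hmth : Measurable fun θ : ℝ => Bad.indicator (fun _ => (1:ℝ≥0∞))
        ((r:ℂ) * Complex.exp (Complex.I * (θ:ℂ))) :=
      hindm.comp (la_zmap_cont r).measurable
    rw [lintegral_const_mul _ hmth, mul_eq_zero] at h0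
    have h0' : (∫⁻ θ in Ioo (-π) π, Bad.indicator (fun _ => (1:ℝ≥0∞))
        ((r:ℂ) * Complex.exp (Complex.I * (θ:ℂ)))) = 0 := by
      rcases h0 with h | h
      · exact absurd h (by simpa using hr0)
      · exact h
    have hz0 := (lintegral_eq_zero_iff hmth).mp h0'
    filter_upwards [hz0] with θ hθ
    have hzball : (r:ℂ) * Complex.exp (Complex.I * (θ:ℂ)) ∈ ball (0:ℂ) 1 := by
      rw [mem_ball_zero_iff, la_abs_z hr0.le]
      exact lt_trans hmem.2 hr₂
    by_contra hcon
    have hBadmem : (r:ℂ) * Complex.exp (Complex.I * (θ:ℂ)) ∈ Bad := ⟨hzball, hcon⟩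
    rw [indicator_of_mem hBadmem] at hθ
    exact one_ne_zero hθ
  -- pointwise slice estimate
  have hmain : ∀ᵐ (r : ℝ) ∂(volume.restrict (Ioo r₁ r₂)),
      0 ≤ curveLen f r ^ p / ((2 * π * r) ^ (p - 1) * dMean f p r) ∧
      ENNReal.ofReal (curveLen f r ^ p / ((2 * π * r) ^ (p - 1) * dMean f p r))
        ≤ ∫⁻ θ in Ioo (-π) π, ENNReal.ofReal r * ENNReal.ofReal
            (jacobian f ((r:ℂ) * Complex.exp (Complex.I * (θ:ℂ)))) := by
    filter_upwards [haeslice] with r hr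
    exact la_slice f hp hr.1 hr.2
  -- final chain
  have hIoo : (∫ r in r₁..r₂, curveLen f r ^ p / ((2 * π * r) ^ (p - 1) * dMean f p r))
      = ∫ r in Ioo r₁ r₂, curveLen f r ^ p / ((2 * π * r) ^ (p - 1) * dMean f p r) := by
    rw [intervalIntegral.integral_of_le hr₁₂.le, integral_Ioc_eq_integral_Ioo]
  rw [hIoo]
  have heq : (∫ r in Ioo r₁ r₂, curveLen f r ^ p / ((2 * π * r) ^ (p - 1) * dMean f p r))
      = (∫⁻ r in Ioo r₁ r₂, ENNReal.ofReal
          (curveLen f r ^ p / ((2 * π * r) ^ (p - 1) * dMean f p r))).toReal :=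
    integral_eq_lintegral_of_nonneg_ae (by filter_upwards [hmain] with r h using h.1)
      (la_meas_h f hp).aestronglyMeasurable
  rw [heq]
  refine le_trans (ENNReal.toReal_mono hTfin ?_) harea
  rw [hpolar]
  exact lintegral_mono_ae (by filter_upwards [hmain] with r h using h.2)
end
end

section
/- Let m > 0, let σ : 𝔹 → ℂ be measurable, and let f : 𝔹 → 𝔹 be a regular sense-preserving homeomorphic solution of the equation f_r = σ(re^{iθ}) |f_θ|^m f_θ, differentiable a.e. with nonvanishing Jacobian. Then a.e. in 𝔹 \ {0} the (m+2)-angular dilatation of f satisfies D_{m+2}(z) = |f_θ|^{m+2} / (r^{m+1} |f_θ|^{m+2} Im σ̄(z)) = 1/(r^{m+1} Im σ̄(z)); equivalently, for every p > 1, D_p(z) = |f_θ|^p / (r^{p-1} |f_θ|^{m+2} Im σ̄(z)), where z = re^{iθ}. -/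
open MeasureTheory Filter Metric Set
open scoped Real Topology

noncomputable section

lemma ofReal_mul_im' (c : ℝ) (w : ℂ) : ((↑c : ℂ) * w).im = c * w.im := by
  simp [Complex.mul_im]

lemma det_eq' (L : ℂ →L[ℝ] ℂ) : L.det = (starRingEnd ℂ (L 1) * L Complex.I).im := by
  show (L : ℂ →ₗ[ℝ] ℂ).det = _
  rw [← LinearMap.det_toMatrix Complex.basisOneI, Matrix.det_fin_two]
  simp [LinearMap.toMatrix_apply, Complex.mul_im]
  ring

lemma key' (L : ℂ →L[ℝ] ℂ) (z : ℂ) :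
    (starRingEnd ℂ (L z) * L (Complex.I * z)).im = Complex.normSq z * L.det := by
  have h1 : L z = z.re • L 1 + z.im • L Complex.I := by
    rw [← L.map_smul, ← L.map_smul, ← map_add]; congr 1; simp [Complex.ext_iff]
  have h2 : L (Complex.I * z) = (-z.im) • L 1 + z.re • L Complex.I := by
    rw [← L.map_smul, ← L.map_smul, ← map_add]; congr 1; simp [Complex.ext_iff]
  rw [det_eq', h1, h2]
  simp only [Complex.real_smul, map_add, map_mul, Complex.normSq_apply,
    Complex.add_im, Complex.mul_im, Complex.add_re, Complex.mul_re,
    Complex.conj_re, Complex.conj_im, Complex.ofReal_re, Complex.ofReal_im]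
  ring

lemma polar_jac (f : ℂ → ℂ) (z : ℂ) (hz : z ≠ 0) :
    (starRingEnd ℂ (radDeriv f z) * angDeriv f z).im = ‖z‖ * jacobian f z := by
  set r : ℝ := ‖z‖ with hr
  have hr0 : 0 < r := norm_pos_iff.mpr hz
  have hdiv : z / ((‖z‖ : ℝ) : ℂ) = r⁻¹ • z := by
    rw [Complex.real_smul, Complex.ofReal_inv, ← hr]
    ring
  have hrad : radDeriv f z = (↑r⁻¹ : ℂ) * fderiv ℝ f z z := by
    rw [radDeriv, hdiv, ContinuousLinearMap.map_smul, Complex.real_smul]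
  rw [hrad, map_mul, Complex.conj_ofReal, angDeriv, mul_assoc, ofReal_mul_im', key']
  have hn : Complex.normSq z = r ^ 2 := by
    rw [Complex.normSq_eq_norm_sq]
  rw [hn, jacobian]
  field_simp

/-- For a regular sense-preserving homeomorphic solution of `f_r = σ |f_θ|^m f_θ`,
a.e. in `𝔹 \ {0}` one has `D_{m+2}(z) = 1/(r^{m+1} Im σ̄(z))` and, for every `p > 1`,
`D_p(z) = |f_θ|^p / (r^{p-1} |f_θ|^{m+2} Im σ̄(z))`. -/
theorem beltrami_dilatation_identity (m : ℝ) (hm : 0 < m) (σ : ℂ → ℂ) (hσ : Measurable σ)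
    (f : ℂ → ℂ)
    (hhomeo : ∃ e : (ball (0:ℂ) 1) ≃ₜ (ball (0:ℂ) 1), ∀ z : (ball (0:ℂ) 1), (e z : ℂ) = f z)
    (hreg : ∀ᵐ z ∂(volume.restrict (ball (0:ℂ) 1)),
      DifferentiableAt ℝ f z ∧ 0 < jacobian f z)
    (heq : ∀ᵐ z ∂(volume.restrict (ball (0:ℂ) 1)),
      radDeriv f z = σ z * (↑(‖angDeriv f z‖ ^ m) : ℂ) * angDeriv f z) :
    ∀ᵐ z ∂(volume.restrict (ball (0:ℂ) 1 \ {0})),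
      angDil f (m + 2) z =
          (‖z‖ ^ (m + 1) * (starRingEnd ℂ (σ z)).im)⁻¹ ∧
        ∀ p : ℝ, 1 < p →
          angDil f p z =
            ‖angDeriv f z‖ ^ p /
              (‖z‖ ^ (p - 1) * ‖angDeriv f z‖ ^ (m + 2) *
                (starRingEnd ℂ (σ z)).im) := by
  have hsub : ball (0:ℂ) 1 \ {0} ⊆ ball (0:ℂ) 1 := diff_subset
  have hreg' := ae_restrict_of_ae_restrict_of_subset hsub hreg
  have heq' := ae_restrict_of_ae_restrict_of_subset hsub heq
  have hmem : ∀ᵐ z ∂(volume.restrict (ball (0:ℂ) 1 \ {0})), z ∈ ball (0:ℂ) 1 \ {0} :=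
    ae_restrict_mem (measurableSet_ball.diff (measurableSet_singleton 0))
  filter_upwards [hreg', heq', hmem] with z hregz heqz hzmem
  obtain ⟨hdiff, hJ⟩ := hregz
  have hz0 : z ≠ 0 := hzmem.2
  set r : ℝ := ‖z‖ with hrdef
  set a : ℝ := ‖angDeriv f z‖ with hadef
  set s : ℝ := (starRingEnd ℂ (σ z)).im with hsdef
  have hr0 : 0 < r := norm_pos_iff.mpr hz0
  have hmain : r * jacobian f z = a ^ m * a ^ (2:ℕ) * s := by
    rw [← polar_jac f z hz0, heqz]
    have hrw : starRingEnd ℂ (σ z * (↑(a ^ m) : ℂ) * angDeriv f z) * angDeriv f z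
        = (↑(a ^ m * Complex.normSq (angDeriv f z)) : ℂ) * starRingEnd ℂ (σ z) := by
      rw [map_mul, map_mul, Complex.conj_ofReal, Complex.ofReal_mul]
      have hc : starRingEnd ℂ (angDeriv f z) * angDeriv f z
          = (↑(Complex.normSq (angDeriv f z)) : ℂ) := by
        rw [mul_comm, Complex.mul_conj]
      calc starRingEnd ℂ (σ z) * (↑(a ^ m) : ℂ) * starRingEnd ℂ (angDeriv f z) * angDeriv f z
          = (↑(a ^ m) : ℂ) * (starRingEnd ℂ (angDeriv f z) * angDeriv f z)
            * starRingEnd ℂ (σ z) := by ring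
        _ = _ := by rw [hc]
    rw [hrw, ofReal_mul_im']
    have hn : Complex.normSq (angDeriv f z) = a ^ (2:ℕ) := by
      rw [Complex.normSq_eq_norm_sq]
    rw [hn, ← hsdef]
  have ha0 : 0 < a := by
    have hge : (0:ℝ) ≤ a := norm_nonneg _
    rcases hge.lt_or_eq with h | h
    · exact h
    · exfalso
      have h0 : r * jacobian f z = 0 := by
        rw [hmain, ← h]
        simp [Real.zero_rpow (ne_of_gt hm)]
      nlinarith
  have hpow : a ^ (m + 2) = a ^ m * a ^ (2:ℕ) := by
    rw [Real.rpow_add ha0]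
    congr 1
    rw [← Real.rpow_natCast a 2]
    norm_num
  have hs0 : 0 < s := by
    have h1 : 0 < a ^ m * a ^ (2:ℕ) := by positivity
    nlinarith [mul_pos hr0 hJ]
  have hJ' : jacobian f z = a ^ (m + 2) * s / r := by
    rw [hpow]
    field_simp
    linarith [hmain]
  have hane : a ^ (m + 2) ≠ 0 := ne_of_gt (Real.rpow_pos_of_pos ha0 _)
  have hgen : ∀ p : ℝ, angDil f p z = a ^ p / (r ^ (p - 1) * a ^ (m + 2) * s) := by
    intro p
    rw [angDil, ← hadef, ← hrdef, hJ']
    congr 1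
    rw [Real.rpow_sub hr0, Real.rpow_one]
    field_simp
  constructor
  · rw [hgen (m + 2)]
    have h21 : m + 2 - 1 = m + 1 := by ring
    rw [h21, div_eq_inv_mul]
    rw [mul_inv, mul_inv]
    field_simp
  · intro p hp
    exact hgen p
end
end
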